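/- Let G be a finite simple graph and X ⊆ V(G) with |X| = k such that G ∖ X is a threshold graph. Then every induced path in G has at most 2k + 3 vertices, i.e., length at most 2k + 2. -/

import Mathlib

open SimpleGraph

variable {V : Type*}

/-- The set of vertices burned by the end of time step `i` (0-indexed: `burnt G s S i` is `B_i`),
when a fire starts at `s` and the firefighter defends the vertices of the list `S` in order. -/
def burnt (G : SimpleGraph V) (s : V) (S : List V) : ℕ → Set V
  | 0 => {s}
  | i + 1 => burnt G s S i ∪
      {u | u ∉ S.take (i + 1) ∧ ∃ b ∈ burnt G s S i, G.Adj u b}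

/-- The set of all vertices ever burned by the strategy `S`. -/
def BurntSet (G : SimpleGraph V) (s : V) (S : List V) : Set V := ⋃ i, burnt G s S i

/-- A strategy is a sequence of pairwise distinct vertices; it is valid if the vertex defended
at each step is not yet burning at the start of that step. -/
def ValidStrategy (G : SimpleGraph V) (s : V) (S : List V) : Prop :=
  S.Nodup ∧ ∀ (i : ℕ) (h : i < S.length), S.get ⟨i, h⟩ ∉ burnt G s S i

/-- The number of vertices saved (i.e. not burned) by the strategy `S`. -/
noncomputable def sav (G : SimpleGraph V) (s : V) (S : List V) : ℕ := (BurntSet G s S)ᶜ.ncard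

/-- A valid strategy is minimal if every proper subsequence of it which is itself a valid
strategy saves strictly fewer vertices. -/
def MinimalStrategy (G : SimpleGraph V) (s : V) (S : List V) : Prop :=
  ValidStrategy G s S ∧ ∀ S' : List V, S'.Sublist S → S' ≠ S → ValidStrategy G s S' →
    sav G s S' < sav G s S

/-- A strategy is optimal if it is minimal and saves the maximum number of vertices. -/
def OptimalStrategy (G : SimpleGraph V) (s : V) (S : List V) : Prop :=
  MinimalStrategy G s S ∧ ∀ S' : List V, ValidStrategy G s S' → sav G s S' ≤ sav G s S

/-- A walk is an induced path if it is a path and the subgraph induced on its vertices has no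
edges besides the edges of the path. -/
def IsInducedPath (G : SimpleGraph V) {a b : V} (p : G.Walk a b) : Prop :=
  p.IsPath ∧ ∀ x ∈ p.support, ∀ y ∈ p.support, G.Adj x y → p.toSubgraph.Adj x y

/-- `u` is reachable from `s` in the subgraph of `G` induced on the complement of `A`. -/
def ReachAvoiding (G : SimpleGraph V) (A : Set V) (s u : V) : Prop :=
  ∃ p : G.Walk s u, ∀ x ∈ p.support, x ∉ A

/-- A graph is a threshold graph if for every two vertices `x, y`,
`N(x) ⊆ N[y]` or `N(y) ⊆ N[x]`. -/
def IsThresholdGraph {W : Type*} (H : SimpleGraph W) : Prop :=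
  ∀ x y : W, H.neighborSet x ⊆ H.neighborSet y ∪ {y} ∨
    H.neighborSet y ⊆ H.neighborSet x ∪ {x}

lemma getVert_mem_support' {G : SimpleGraph V} {u v : V} (p : G.Walk u v) (i : ℕ) :
    p.getVert i ∈ p.support := by
  induction p generalizing i with
  | nil => simp [Walk.getVert]
  | cons h q ih =>
    cases i with
    | zero => simp [Walk.getVert]
    | succ n => simp only [Walk.getVert, Walk.support_cons, List.mem_cons]; exact Or.inr (ih n)

lemma getVert_injOn' {G : SimpleGraph V} {u v : V} (p : G.Walk u v) (hp : p.IsPath) :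
    ∀ i ≤ p.length, ∀ j ≤ p.length, p.getVert i = p.getVert j → i = j := by
  induction p with
  | nil => intro i hi j hj _; simp_all
  | cons h q ih =>
    intro i hi j hj hij
    have hq := hp.of_cons
    have hu := (SimpleGraph.Walk.cons_isPath_iff _ _).mp hp |>.2
    cases i with
    | zero =>
      cases j with
      | zero => rfl
      | succ m =>
        exfalso
        apply hu
        rw [Walk.getVert_zero] at hij
        rw [Walk.getVert_cons_succ] at hij
        rw [hij]
        exact getVert_mem_support' q m
    | succ n =>
      cases j with
      | zero =>
        exfalso
        apply hu
        rw [Walk.getVert_zero] at hij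
        rw [Walk.getVert_cons_succ] at hij
        rw [← hij]
        exact getVert_mem_support' q n
      | succ m =>
        rw [Walk.getVert_cons_succ, Walk.getVert_cons_succ] at hij
        simp only [Walk.length_cons, Nat.succ_le_succ_iff] at hi hj
        exact congrArg Nat.succ (ih hq n hi m hj hij)

/-- If `X ⊆ V(G)` has size `k` and `G ∖ X` is a threshold graph, then every
induced path in `G` has length at most `2k + 2` (at most `2k + 3` vertices). -/
theorem induced_path_le_of_threshold_modulator {V : Type*} [Fintype V] (G : SimpleGraph V)
    (X : Finset V) (k : ℕ) (hX : X.card = k)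
    (hth : IsThresholdGraph (G.induce ((↑X : Set V)ᶜ)))
    {a b : V} (p : G.Walk a b) (hp : IsInducedPath G p) :
    p.length ≤ 2 * k + 2 := by
  classical
  by_contra hlen
  push_neg at hlen
  set n := p.length with hn
  have hn3 : 2 * k + 3 ≤ n := hlen
  set f := p.getVert with hf
  have hinj : ∀ i ≤ n, ∀ j ≤ n, f i = f j → i = j := getVert_injOn' p hp.1
  -- nonadjacency at distance ≥ 2
  have hnadj : ∀ i m, i < m → m ≤ n → m ≠ i + 1 → ¬ G.Adj (f i) (f m) := by
    intro i m him hmn hm1 hadj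
    have hsub := hp.2 (f i) (getVert_mem_support' p i) (f m) (getVert_mem_support' p m) hadj
    obtain ⟨t, ht, htn⟩ := (Walk.toSubgraph_adj_iff p).mp hsub
    rw [Sym2.eq_iff] at ht
    rcases ht with ⟨h1, h2⟩ | ⟨h1, h2⟩
    · have e1 : t = i := hinj t (by omega) i (by omega) h1
      have e2 : t + 1 = m := hinj (t+1) (by omega) m (by omega) h2
      omega
    · have e1 : t = m := hinj t (by omega) m (by omega) h1
      have e2 : t + 1 = i := hinj (t+1) (by omega) i (by omega) h2
      omega
  -- the key threshold contradiction for two edges (i,i+1), (m,m+1) with m ≥ i+2 avoiding X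
  have hkey : ∀ i m, i + 2 ≤ m → m + 1 ≤ n →
      f i ∉ X → f (i+1) ∉ X → f m ∉ X → f (m+1) ∉ X → False := by
    intro i m him hmn hi0 hi1 hm0 hm1
    have hwi : f i ∈ ((↑X : Set V)ᶜ) := hi0
    have hxi : f (i+1) ∈ ((↑X : Set V)ᶜ) := hi1
    have hyi : f m ∈ ((↑X : Set V)ᶜ) := hm0
    have hzi : f (m+1) ∈ ((↑X : Set V)ᶜ) := hm1
    have hadj1 : G.Adj (f i) (f (i+1)) := p.adj_getVert_succ (by omega)
    have hadj2 : G.Adj (f m) (f (m+1)) := p.adj_getVert_succ (by omega)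
    rcases hth ⟨f i, hwi⟩ ⟨f (m+1), hzi⟩ with hc | hc
    · have hmem : (⟨f (i+1), hxi⟩ : ((↑X : Set V)ᶜ : Set V)) ∈
          (G.induce ((↑X : Set V)ᶜ)).neighborSet ⟨f i, hwi⟩ := by
        simp [SimpleGraph.mem_neighborSet, SimpleGraph.comap_adj, hadj1]
      rcases hc hmem with h | h
      · have : G.Adj (f (m+1)) (f (i+1)) := by
          simpa [SimpleGraph.mem_neighborSet, SimpleGraph.comap_adj] using h
        exact hnadj (i+1) (m+1) (by omega) (by omega) (by omega) this.symm
      · have : f (i+1) = f (m+1) := congrArg Subtype.val h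
        have := hinj (i+1) (by omega) (m+1) (by omega) this
        omega
    · have hmem : (⟨f m, hyi⟩ : ((↑X : Set V)ᶜ : Set V)) ∈
          (G.induce ((↑X : Set V)ᶜ)).neighborSet ⟨f (m+1), hzi⟩ := by
        simp [SimpleGraph.mem_neighborSet, SimpleGraph.comap_adj, hadj2.symm]
      rcases hc hmem with h | h
      · have : G.Adj (f i) (f m) := by
          simpa [SimpleGraph.mem_neighborSet, SimpleGraph.comap_adj] using h
        exact hnadj i m (by omega) (by omega) (by omega) this
      · have : f m = f i := congrArg Subtype.val h
        have := hinj m (by omega) i (by omega) this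
        omega
  -- pigeonhole
  set B := (Finset.range (k+2)).filter (fun j => f (2*j) ∈ X ∨ f (2*j+1) ∈ X) with hB
  have hBcard : B.card ≤ k := by
    rw [← hX]
    apply Finset.card_le_card_of_injOn (fun j => if f (2*j) ∈ X then f (2*j) else f (2*j+1))
    · intro j hj
      simp only [hB, Finset.mem_coe, Finset.coe_filter, Set.mem_setOf_eq, Finset.mem_filter, Finset.mem_range] at hj
      rcases hj.2 with h | h
      · simp [h]
      · simp only; split <;> simp_all
    · intro j1 hj1 j2 hj2 heq
      simp only [hB, Finset.mem_filter, Finset.mem_range, Finset.coe_filter, Set.mem_setOf_eq] at hj1 hj2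
      have b1 : 2 * j1 + 1 ≤ n := by omega
      have b2 : 2 * j2 + 1 ≤ n := by omega
      simp only at heq
      split at heq <;> split at heq
      · have := hinj (2*j1) (by omega) (2*j2) (by omega) heq; omega
      · have := hinj (2*j1) (by omega) (2*j2+1) (by omega) heq; omega
      · have := hinj (2*j1+1) (by omega) (2*j2) (by omega) heq; omega
      · have := hinj (2*j1+1) (by omega) (2*j2+1) (by omega) heq; omega
  have hBsub : B ⊆ Finset.range (k+2) := Finset.filter_subset _ _
  have hgood : 2 ≤ ((Finset.range (k+2)) \ B).card := by
    rw [Finset.card_sdiff_of_subset hBsub, Finset.card_range]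
    omega
  obtain ⟨j1, hj1, j2, hj2, hne⟩ := Finset.one_lt_card.mp (by omega : 1 < ((Finset.range (k+2)) \ B).card)
  simp only [Finset.mem_sdiff, Finset.mem_range, hB, Finset.mem_filter, not_and, not_or] at hj1 hj2
  have hg1 := hj1.2
  have hg2 := hj2.2
  rcases Nat.lt_or_ge j1 j2 with hlt | hge
  · have h1 := hg1 (by simp [hj1.1])
    have h2 := hg2 (by simp [hj2.1])
    exact hkey (2*j1) (2*j2) (by omega) (by omega) h1.1 h1.2 h2.1 h2.2
  · have hlt2 : j2 < j1 := by omega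
    have h1 := hg1 (by simp [hj1.1])
    have h2 := hg2 (by simp [hj2.1])
    exact hkey (2*j2) (2*j1) (by omega) (by omega) h2.1 h2.2 h1.1 h1.2
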